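/- Let F be an orthogonally invariant class of nonsingular n×n real matrices and let ε > 0. Suppose there exists adaptive information of cardinality k using matrix-vector multiplications (where z_1 may depend on b and each z_{i+1} may depend on b and the previously computed products A z_1, …, A z_i) together with an algorithm φ such that ‖A φ(b, A z_1, …, A z_k) − b‖ ≤ ε for every A ∈ F and every b ∈ ℝ^n with ‖b‖ = 1. Then there exists an algorithm φ′ using Krylov information of cardinality 2k + 2 such that ‖A φ′(b, Ab, A²b, …, A^{2k+2} b) − b‖ ≤ ε for every A ∈ F and every b with ‖b‖ = 1. That is, for any orthogonally invariant class, Krylov information is optimal among all matrix-vector multiplication information to within a multiplicative factor of 2: m(ε) ≤ m^Kr(ε) ≤ 2 m(ε) + 2. -/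

import Mathlib

open Matrix

/-- The Euclidean norm on `ℝ^n`. -/
noncomputable def euclNorm {n : ℕ} (v : Fin n → ℝ) : ℝ := Real.sqrt (∑ i, v i ^ 2)

namespace Krylov
variable {n : ℕ}

lemma euclNorm_eq_dot (v : Fin n → ℝ) : euclNorm v = Real.sqrt (v ⬝ᵥ v) := by
  simp [euclNorm, dotProduct, sq]

lemma dot_mulVec_orth {Q : Matrix (Fin n) (Fin n) ℝ} (hQ : Qᵀ * Q = 1)
    (u v : Fin n → ℝ) : (Q.mulVec u) ⬝ᵥ (Q.mulVec v) = u ⬝ᵥ v := by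
  rw [dotProduct_mulVec, vecMul_mulVec, hQ, vecMul_one]

lemma euclNorm_mulVec_orth {Q : Matrix (Fin n) (Fin n) ℝ} (hQ : Qᵀ * Q = 1)
    (v : Fin n → ℝ) : euclNorm (Q.mulVec v) = euclNorm v := by
  rw [euclNorm_eq_dot, euclNorm_eq_dot, dot_mulVec_orth hQ]

lemma dot_self_eq_zero' {d : Fin n → ℝ} (h : d ⬝ᵥ d = 0) : d = 0 := by
  ext i
  have := Finset.sum_eq_zero_iff_of_nonneg (fun j _ => mul_self_nonneg (d j)) |>.mp h i (Finset.mem_univ i)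
  simpa using mul_self_eq_zero.mp this

noncomputable def hh (d : Fin n → ℝ) : Matrix (Fin n) (Fin n) ℝ :=
  1 - (2 / (d ⬝ᵥ d)) • vecMulVec d d

lemma vecMulVec_mulVec (d e v : Fin n → ℝ) :
    (vecMulVec d e).mulVec v = (e ⬝ᵥ v) • d := by
  ext i
  simp only [mulVec, dotProduct, vecMulVec_apply, Pi.smul_apply, smul_eq_mul,
    Finset.sum_mul, Finset.mul_sum]
  apply Finset.sum_congr rfl
  intro j _
  ring

lemma vecMulVec_mul_vecMulVec (d : Fin n → ℝ) :
    vecMulVec d d * vecMulVec d d = (d ⬝ᵥ d) • vecMulVec d d := by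
  ext i j
  simp only [mul_apply, vecMulVec_apply, Matrix.smul_apply, dotProduct, smul_eq_mul,
    Finset.sum_mul, Finset.mul_sum]
  apply Finset.sum_congr rfl
  intro l _
  ring

lemma hh_mulVec (d v : Fin n → ℝ) :
    (hh d).mulVec v = v - ((2 / (d ⬝ᵥ d)) * (d ⬝ᵥ v)) • d := by
  rw [hh, sub_mulVec, one_mulVec, smul_mulVec, vecMulVec_mulVec, smul_smul]

lemma hh_transpose (d : Fin n → ℝ) : (hh d)ᵀ = hh d := by
  rw [hh, transpose_sub, transpose_one, transpose_smul]
  congr 1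
  ext i j
  simp [vecMulVec_apply, mul_comm]

lemma hh_orth (d : Fin n → ℝ) : (hh d)ᵀ * hh d = 1 := by
  rw [hh_transpose]
  by_cases hd : d ⬝ᵥ d = 0
  · have : d = 0 := dot_self_eq_zero' hd
    subst this
    simp [hh]
  · rw [hh, sub_mul, mul_sub, mul_sub, one_mul, mul_one]
    simp only [smul_mul_assoc, mul_smul_comm, vecMulVec_mul_vecMulVec, smul_smul, one_mul]
    have h4 : 2 / (d ⬝ᵥ d) * (2 / (d ⬝ᵥ d) * (d ⬝ᵥ d)) = 2 / (d ⬝ᵥ d) + 2 / (d ⬝ᵥ d) := by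
      field_simp; ring
    rw [h4, add_smul]
    abel

lemma hh_map (w f : Fin n → ℝ) (hwf : f ⬝ᵥ f = w ⬝ᵥ w) :
    (hh (w - f)).mulVec w = f := by
  rw [hh_mulVec]
  set d := w - f with hd
  by_cases h0 : d ⬝ᵥ d = 0
  · have hdz : d = 0 := dot_self_eq_zero' h0
    have : w = f := by
      have := sub_eq_zero.mp hdz
      exact this
    simp [hdz, this]
  · have hdd : d ⬝ᵥ d = 2 * (d ⬝ᵥ w) := by
      simp only [hd, sub_dotProduct, dotProduct_sub]
      rw [dotProduct_comm f w] at *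
      ring_nf
      rw [hwf]
      ring
    have hdw : d ⬝ᵥ w ≠ 0 := by
      intro h
      rw [hdd, h] at h0
      simp at h0
    have : 2 / (d ⬝ᵥ d) * (d ⬝ᵥ w) = 1 := by
      rw [hdd]; field_simp
    rw [this, one_smul, hd]
    abel

lemma hh_neg (d : Fin n → ℝ) : hh (-d) = hh d := by
  have h1 : vecMulVec (-d) (-d) = vecMulVec d d := by
    ext i j; simp [vecMulVec_apply]
  simp [hh, h1, neg_dotProduct, dotProduct_neg]

lemma dot_self_nonneg (d : Fin n → ℝ) : 0 ≤ d ⬝ᵥ d :=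
  Finset.sum_nonneg fun i _ => mul_self_nonneg (d i)

lemma dot_self_pos {d : Fin n → ℝ} (hd : d ≠ 0) : 0 < d ⬝ᵥ d :=
  (dot_self_nonneg d).lt_of_ne' fun h => hd (dot_self_eq_zero' h)

lemma hh_fix (d v : Fin n → ℝ) (h : d ⬝ᵥ v = 0) : (hh d).mulVec v = v := by
  rw [hh_mulVec, h]
  simp

/-- The rotation lemma. -/
lemma rotate (w f : Fin n → ℝ) (hf : f ≠ 0) :
    ∃ R : Matrix (Fin n) (Fin n) ℝ, Rᵀ * R = 1 ∧ Rᵀ = R ∧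
      (∀ v, v ⬝ᵥ w = 0 → v ⬝ᵥ f = 0 → R.mulVec v = v) ∧
      (∃ s : ℝ, w = s • R.mulVec f) ∧ (∃ t : ℝ, R.mulVec w = t • f) := by
  by_cases hw : w = 0
  · exact ⟨1, by simp, by simp, fun v _ _ => by simp, ⟨0, by simp [hw]⟩, ⟨0, by simp [hw]⟩⟩
  · have hwpos : 0 < w ⬝ᵥ w := dot_self_pos hw
    have hfpos : 0 < f ⬝ᵥ f := dot_self_pos hf
    obtain ⟨s, f₁, hf₁, hnorm⟩ :
        ∃ (s : ℝ) (f₁ : Fin n → ℝ), f₁ = s • f ∧ f₁ ⬝ᵥ f₁ = w ⬝ᵥ w := by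
      refine ⟨Real.sqrt (w ⬝ᵥ w) / Real.sqrt (f ⬝ᵥ f), _, rfl, ?_⟩
      simp only [smul_dotProduct, dotProduct_smul, smul_eq_mul]
      have h1 : Real.sqrt (f ⬝ᵥ f) ≠ 0 := by positivity
      have h2 : Real.sqrt (w ⬝ᵥ w) * Real.sqrt (w ⬝ᵥ w) = w ⬝ᵥ w :=
        Real.mul_self_sqrt hwpos.le
      have h3 : Real.sqrt (f ⬝ᵥ f) * Real.sqrt (f ⬝ᵥ f) = f ⬝ᵥ f :=
        Real.mul_self_sqrt hfpos.le
      field_simp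
      nlinarith [h2, h3]
    refine ⟨hh (w - f₁), hh_orth _, hh_transpose _, ?_, ?_, ?_⟩
    · intro v hvw hvf
      apply hh_fix
      rw [dotProduct_comm]
      simp only [dotProduct_sub, hvw, hf₁, dotProduct_smul, hvf, smul_eq_mul, mul_zero, sub_zero]
    · refine ⟨s, ?_⟩
      have h1 : (hh (w - f₁)).mulVec f₁ = w := by
        have := hh_map f₁ w (by rw [hnorm])
        rwa [← hh_neg, neg_sub] at this
      rw [← mulVec_smul, ← hf₁, h1]
    · refine ⟨s, ?_⟩
      rw [hh_map w f₁ hnorm, hf₁]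

lemma exists_proj (E : Submodule ℝ (Fin n → ℝ)) (x : Fin n → ℝ) :
    ∃ u ∈ E, ∀ e ∈ E, e ⬝ᵥ (x - u) = 0 := by
  let L : (Fin n → ℝ) ≃ₗ[ℝ] EuclideanSpace ℝ (Fin n) :=
    (WithLp.linearEquiv 2 ℝ (Fin n → ℝ)).symm
  let E' : Submodule ℝ (EuclideanSpace ℝ (Fin n)) := E.map (L : (Fin n → ℝ) →ₗ[ℝ] EuclideanSpace ℝ (Fin n))
  obtain ⟨u', hu', z, hz, hdec⟩ := E'.exists_add_mem_mem_orthogonal (L x)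
  obtain ⟨u, huE, rfl⟩ := hu'
  refine ⟨u, huE, fun e he => ?_⟩
  have hinner : inner ℝ (L e) z = (0 : ℝ) :=
    (Submodule.mem_orthogonal E' z).mp hz (L e) ⟨e, he, rfl⟩
  have hxz : x - u = L.symm z := by
    have := congrArg L.symm hdec
    simp only [LinearEquiv.coe_coe, LinearEquiv.symm_apply_apply, map_add] at this
    rw [this]
    abel
  rw [hxz]
  rw [← hinner]
  simp [PiLp.inner_apply, RCLike.inner_apply, dotProduct, L, mul_comm]

lemma range_fin_eq_image (M : ℕ) (w : ℕ → (Fin n → ℝ)) :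
    Set.range (fun j : Fin M => w j) = w '' Set.Iio M := by
  ext v
  constructor
  · rintro ⟨j, rfl⟩; exact ⟨j, j.isLt, rfl⟩
  · rintro ⟨j, hj, rfl⟩; exact ⟨⟨j, hj⟩, rfl⟩

lemma exists_mem_span_earlier (w : ℕ → (Fin n → ℝ)) :
    ∀ M : ℕ, ¬ LinearIndependent ℝ (fun j : Fin M => w j) →
      ∃ m < M, w m ∈ Submodule.span ℝ (w '' Set.Iio m) := by
  intro M
  induction M with
  | zero => intro h; exact absurd linearIndependent_empty_type h
  | succ M ih =>
    intro h
    have hsnoc : (fun j : Fin (M+1) => w j) =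
        Fin.snoc (fun j : Fin M => w j) (w M) := by
      funext j
      refine Fin.lastCases ?_ ?_ j
      · simp [Fin.snoc_last]
      · intro i; simp [Fin.snoc_castSucc]
    rw [hsnoc, linearIndependent_fin_snoc] at h
    push_neg at h
    by_cases hli : LinearIndependent ℝ (fun j : Fin M => w j)
    · refine ⟨M, Nat.lt_succ_self M, ?_⟩
      have := h hli
      rwa [range_fin_eq_image] at this
    · obtain ⟨m, hm, hmem⟩ := ih hli
      exact ⟨m, hm.trans (Nat.lt_succ_self M), hmem⟩

def kvec (B : Matrix (Fin n) (Fin n) ℝ) (b : Fin n → ℝ) (j : ℕ) : Fin n → ℝ :=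
  (B ^ j).mulVec b

def KS (B : Matrix (Fin n) (Fin n) ℝ) (b : Fin n → ℝ) (m : ℕ) : Submodule ℝ (Fin n → ℝ) :=
  Submodule.span ℝ (kvec B b '' Set.Iio m)

lemma KS_mono (B : Matrix (Fin n) (Fin n) ℝ) (b : Fin n → ℝ) {m m' : ℕ} (h : m ≤ m') :
    KS B b m ≤ KS B b m' :=
  Submodule.span_mono (Set.image_mono fun _ hj => lt_of_lt_of_le hj h)

lemma kvec_mem_KS (B : Matrix (Fin n) (Fin n) ℝ) (b : Fin n → ℝ) {j m : ℕ} (h : j < m) :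
    kvec B b j ∈ KS B b m :=
  Submodule.subset_span ⟨j, h, rfl⟩

lemma kvec_zero (B : Matrix (Fin n) (Fin n) ℝ) (b : Fin n → ℝ) : kvec B b 0 = b := by
  simp [kvec]

lemma kvec_succ (B : Matrix (Fin n) (Fin n) ℝ) (b : Fin n → ℝ) (j : ℕ) :
    B.mulVec (kvec B b j) = kvec B b (j + 1) := by
  rw [kvec, kvec, mulVec_mulVec, ← pow_succ']

lemma mulVec_mem_KS (B : Matrix (Fin n) (Fin n) ℝ) (b : Fin n → ℝ) {m : ℕ} {x : Fin n → ℝ}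
    (hx : x ∈ KS B b m) : B.mulVec x ∈ KS B b (m + 1) := by
  induction hx using Submodule.span_induction with
  | mem v hv =>
    obtain ⟨j, hj, rfl⟩ := hv
    rw [kvec_succ]
    have hj' : j < m := hj
    exact kvec_mem_KS B b (by omega)
  | zero => rw [Matrix.mulVec_zero]; exact Submodule.zero_mem _
  | add u v _ _ hu hv => rw [Matrix.mulVec_add]; exact Submodule.add_mem _ hu hv
  | smul a u _ hu => rw [Matrix.mulVec_smul]; exact Submodule.smul_mem _ a hu

lemma KS_congr {B B' : Matrix (Fin n) (Fin n) ℝ} (b : Fin n → ℝ) {m : ℕ}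
    (h : ∀ j < m, kvec B' b j = kvec B b j) : KS B' b m = KS B b m := by
  unfold KS
  congr 1
  exact Set.image_congr fun j hj => h j hj

lemma mem_KS_iff (B : Matrix (Fin n) (Fin n) ℝ) (b : Fin n → ℝ) (M : ℕ) (x : Fin n → ℝ) :
    x ∈ KS B b M ↔ ∃ c : Fin M → ℝ, ∑ j, c j • kvec B b j = x := by
  rw [KS, ← range_fin_eq_image M (kvec B b)]
  exact Submodule.mem_span_range_iff_exists_fun ℝ

lemma conj_pow {R B : Matrix (Fin n) (Fin n) ℝ} (hR : Rᵀ * R = 1) (m : ℕ) :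
    (Rᵀ * B * R) ^ m = Rᵀ * B ^ m * R := by
  have hR' : R * Rᵀ = 1 := mul_eq_one_comm.mp hR
  induction m with
  | zero => simp [hR]
  | succ m ih =>
    rw [pow_succ, ih, pow_succ]
    calc Rᵀ * B ^ m * R * (Rᵀ * B * R) = Rᵀ * B ^ m * (R * Rᵀ) * B * R := by
          noncomm_ring
      _ = Rᵀ * (B ^ m * B) * R := by rw [hR']; noncomm_ring

lemma kvec_conj {R B : Matrix (Fin n) (Fin n) ℝ} {b : Fin n → ℝ} (hR : Rᵀ * R = 1)
    (hRb : R.mulVec b = b) (j : ℕ) :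
    kvec (Rᵀ * B * R) b j = Rᵀ.mulVec (kvec B b j) := by
  rw [kvec, conj_pow hR, kvec, ← mulVec_mulVec, ← mulVec_mulVec, hRb]

lemma indep_conj {R B : Matrix (Fin n) (Fin n) ℝ} {b : Fin n → ℝ} (hR : Rᵀ * R = 1)
    (hRb : R.mulVec b = b) (M : ℕ)
    (h : LinearIndependent ℝ (fun j : Fin M => kvec B b j)) :
    LinearIndependent ℝ (fun j : Fin M => kvec (Rᵀ * B * R) b j) := by
  have hR' : R * Rᵀ = 1 := mul_eq_one_comm.mp hR
  have hinj : Function.Injective (Rᵀ).mulVecLin := by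
    intro x y hxy
    have := congrArg R.mulVec hxy
    rwa [mulVecLin_apply, mulVecLin_apply, mulVec_mulVec, mulVec_mulVec, hR',
      one_mulVec, one_mulVec] at this
  have : (fun j : Fin M => kvec (Rᵀ * B * R) b j)
      = (Rᵀ).mulVecLin ∘ (fun j : Fin M => kvec B b j) := by
    funext j
    rw [Function.comp_apply, mulVecLin_apply]
    exact kvec_conj hR hRb j
  rw [this]
  exact h.map' _ (LinearMap.ker_eq_bot.mpr hinj)

lemma transpose_fix {R : Matrix (Fin n) (Fin n) ℝ} (hR : Rᵀ * R = 1) {v : Fin n → ℝ}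
    (h : R.mulVec v = v) : Rᵀ.mulVec v = v := by
  conv_lhs => rw [← h]
  rw [mulVec_mulVec, hR, one_mulVec]

lemma mulVec_sum_smul (R : Matrix (Fin n) (Fin n) ℝ) {M : ℕ} (c : Fin M → ℝ)
    (v : Fin M → (Fin n → ℝ)) :
    R.mulVec (∑ j, c j • v j) = ∑ j, c j • R.mulVec (v j) := by
  have : R.mulVec (∑ j, c j • v j) = R.mulVecLin (∑ j, c j • v j) := rfl
  rw [this, map_sum]
  simp [mulVecLin_apply]

lemma bmem_KS (B : Matrix (Fin n) (Fin n) ℝ) (b : Fin n → ℝ) {m : ℕ} (hm : 0 < m) :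
    b ∈ KS B b m := by
  have := kvec_mem_KS B b hm
  rwa [kvec_zero] at this

lemma kvec_not_mem_KS {B : Matrix (Fin n) (Fin n) ℝ} {b : Fin n → ℝ} {M : ℕ}
    (h : LinearIndependent ℝ (fun j : Fin M => kvec B b j)) {m : ℕ} (hm : m < M) :
    kvec B b m ∉ KS B b m := by
  have h2 := h.notMem_span_image (s := {j : Fin M | (j : ℕ) < m}) (x := ⟨m, hm⟩)
    (by simp)
  intro hmem
  apply h2
  have himg : (fun j : Fin M => kvec B b j) '' {j : Fin M | (j : ℕ) < m}
      = kvec B b '' Set.Iio m := by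
    ext v
    constructor
    · rintro ⟨j, hj, rfl⟩; exact ⟨j, hj, rfl⟩
    · rintro ⟨t, ht, rfl⟩
      exact ⟨⟨t, lt_trans ht hm⟩, ht, rfl⟩
  rw [himg]
  exact hmem

lemma run_preserve (ζ : (i : ℕ) → (Fin n → ℝ) → (Fin i → (Fin n → ℝ)) → (Fin n → ℝ))
    (y : Matrix (Fin n) (Fin n) ℝ → (Fin n → ℝ) → ℕ → (Fin n → ℝ))
    (hy : ∀ A b i, y A b i = A.mulVec (ζ i b (fun j : Fin i => y A b j.1)))
    (b : Fin n → ℝ) {R B : Matrix (Fin n) (Fin n) ℝ} (hR : Rᵀ * R = 1)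
    (i : ℕ)
    (hfix : ∀ j < i, R.mulVec (ζ j b (fun l : Fin j => y B b l.1))
        = ζ j b (fun l : Fin j => y B b l.1) ∧ R.mulVec (y B b j) = y B b j) :
    ∀ j < i, y (Rᵀ * B * R) b j = y B b j := by
  intro j
  induction j using Nat.strong_induction_on with
  | _ j ih =>
    intro hj
    have hz : (fun l : Fin j => y (Rᵀ * B * R) b l.1) = (fun l : Fin j => y B b l.1) :=
      funext fun l => ih l.1 l.isLt (lt_trans l.isLt hj)
    rw [hy (Rᵀ * B * R) b j, hz, ← mulVec_mulVec, ← mulVec_mulVec, (hfix j hj).1,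
      ← hy B b j]
    exact transpose_fix hR (hfix j hj).2

lemma degenerate {A : Matrix (Fin n) (Fin n) ℝ} (hA : IsUnit A) (b : Fin n → ℝ) (M : ℕ)
    (hdep : ¬ LinearIndependent ℝ (fun j : Fin M => kvec A b j)) :
    ∃ x ∈ KS A b M, A.mulVec x = b := by
  obtain ⟨m, hmM, hmem⟩ := exists_mem_span_earlier (kvec A b) M hdep
  rcases Nat.eq_zero_or_pos m with rfl | hmpos
  · have hb0 : b = 0 := by
      have h0 : kvec A b 0 ∈ Submodule.span ℝ (kvec A b '' Set.Iio 0) := hmem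
      have hio : Set.Iio (0:ℕ) = ∅ := by ext t; simp
      rw [hio, Set.image_empty, Submodule.span_empty, Submodule.mem_bot, kvec_zero] at h0
      exact h0
    exact ⟨0, Submodule.zero_mem _, by simp [hb0]⟩
  · have hWmem : kvec A b m ∈ KS A b m := hmem
    have hinv : ∀ x ∈ KS A b m, A.mulVec x ∈ KS A b m := by
      intro x hx
      induction hx using Submodule.span_induction with
      | mem v hv =>
        obtain ⟨j, hj, rfl⟩ := hv
        have hj' : j < m := hj
        rw [kvec_succ]
        rcases Nat.lt_or_ge (j+1) m with h | h
        · exact kvec_mem_KS A b h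
        · have : j + 1 = m := le_antisymm hj' h
          rw [this]; exact hWmem
      | zero => rw [Matrix.mulVec_zero]; exact Submodule.zero_mem _
      | add u v _ _ hu hv => rw [Matrix.mulVec_add]; exact Submodule.add_mem _ hu hv
      | smul a u _ hu => rw [Matrix.mulVec_smul]; exact Submodule.smul_mem _ a hu
    have hmap : ∀ x ∈ KS A b m, A.mulVecLin x ∈ KS A b m := hinv
    let L : KS A b m →ₗ[ℝ] KS A b m := A.mulVecLin.restrict hmap
    have hLin : Function.Injective L := by
      intro x y hxy
      have h1 : A.mulVec (x : Fin n → ℝ) = A.mulVec (y : Fin n → ℝ) := by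
        have := congrArg (Subtype.val) hxy
        exact this
      apply Subtype.ext
      exact Matrix.mulVec_injective_iff_isUnit.mpr hA h1
    have hLsurj : Function.Surjective L :=
      (LinearMap.injective_iff_surjective).mp hLin
    have hbW : b ∈ KS A b m := bmem_KS A b hmpos
    obtain ⟨x, hx⟩ := hLsurj ⟨b, hbW⟩
    refine ⟨(x : Fin n → ℝ), KS_mono A b hmM.le x.2, ?_⟩
    have := congrArg (Subtype.val) hx
    exact this

lemma euclNorm_transpose_orth {Q : Matrix (Fin n) (Fin n) ℝ} (hQ : Qᵀ * Q = 1)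
    (v : Fin n → ℝ) : euclNorm (Qᵀ.mulVec v) = euclNorm v :=
  euclNorm_mulVec_orth (by rw [transpose_transpose]; exact mul_eq_one_comm.mp hQ) v

lemma G_transfer {b : Fin n → ℝ} {R B : Matrix (Fin n) (Fin n) ℝ} (hR : Rᵀ * R = 1)
    (hRb : R.mulVec b = b) {K : ℕ} {ε : ℝ}
    (h : ∃ c : Fin K → ℝ, euclNorm ((∑ j, c j • kvec (Rᵀ * B * R) b ((j : ℕ)+1)) - b) ≤ ε) :
    ∃ c : Fin K → ℝ, euclNorm ((∑ j, c j • kvec B b ((j : ℕ)+1)) - b) ≤ ε := by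
  obtain ⟨c, hc⟩ := h
  refine ⟨c, ?_⟩
  have h1 : ∑ j : Fin K, c j • kvec (Rᵀ * B * R) b ((j : ℕ)+1)
      = Rᵀ.mulVec (∑ j : Fin K, c j • kvec B b ((j : ℕ)+1)) := by
    rw [mulVec_sum_smul]
    exact Finset.sum_congr rfl fun j _ => by rw [kvec_conj hR hRb]
  have h2 : Rᵀ.mulVec b = b := transpose_fix hR hRb
  rw [h1, ← h2, ← Matrix.mulVec_sub, euclNorm_transpose_orth hR] at hc
  rwa [h2] at hc

end Krylov

open Krylov in
/-- **Krylov information is optimal to within a multiplicative factor of 2.**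
Let `F` be an orthogonally invariant class of nonsingular `n × n` matrices.  Suppose
adaptive information of cardinality `k` using matrix-vector multiplications (the maps
`ζ` choose `z₁ = ζ 0 b` and `z_{i+1} = ζ (i+1) b (Az₁, …, Az_i)`, and `y A b i = A z_{i+1}`
are the computed products) together with an algorithm `φ` achieves residual `≤ ε` for
every `A ∈ F` and unit `b`.  Then some algorithm `φ'` using Krylov information of
cardinality `2k + 2` also achieves residual `≤ ε` for every `A ∈ F` and unit `b`. -/
theorem stmt_10 (n k : ℕ) (F : Set (Matrix (Fin n) (Fin n) ℝ))
    (hFns : ∀ A ∈ F, IsUnit A)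
    (hFoi : ∀ A ∈ F, ∀ Q : Matrix (Fin n) (Fin n) ℝ, Qᵀ * Q = 1 → Qᵀ * A * Q ∈ F)
    (ε : ℝ) (hε : 0 < ε)
    (ζ : (i : ℕ) → (Fin n → ℝ) → (Fin i → (Fin n → ℝ)) → (Fin n → ℝ))
    (y : Matrix (Fin n) (Fin n) ℝ → (Fin n → ℝ) → ℕ → (Fin n → ℝ))
    (hy : ∀ A b i, y A b i = A.mulVec (ζ i b (fun j : Fin i => y A b j.1)))
    (φ : (Fin n → ℝ) × (Fin k → (Fin n → ℝ)) → (Fin n → ℝ))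
    (hφ : ∀ A ∈ F, ∀ b : Fin n → ℝ, euclNorm b = 1 →
      euclNorm (A.mulVec (φ (b, fun i => y A b i.1)) - b) ≤ ε) :
    ∃ φ' : (Fin n → ℝ) × (Fin (2 * k + 2) → (Fin n → ℝ)) → (Fin n → ℝ),
      ∀ A ∈ F, ∀ b : Fin n → ℝ, euclNorm b = 1 →
        euclNorm (A.mulVec (φ' (b, fun i => (A ^ ((i : ℕ) + 1)).mulVec b)) - b) ≤ ε := by
  classical
  have core : ∀ A ∈ F, ∀ b : Fin n → ℝ, euclNorm b = 1 →
      ∃ c : Fin (2 * k + 2) → ℝ,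
        euclNorm ((∑ j, c j • kvec A b ((j : ℕ) + 1)) - b) ≤ ε := by
    intro A hA b hb
    by_cases hind : LinearIndependent ℝ (fun j : Fin (2 * k + 2) => kvec A b (j : ℕ))
    · -- independent case: rotate step by step
      have build : ∀ i : ℕ, i ≤ k → ∃ B ∈ F,
          LinearIndependent ℝ (fun j : Fin (2 * k + 2) => kvec B b (j : ℕ)) ∧
          (∀ j < i, ζ j b (fun l : Fin j => y B b l.1) ∈ KS B b (2 * i + 1) ∧
            y B b j ∈ KS B b (2 * i + 1)) ∧
          ((∃ c : Fin (2 * k + 2) → ℝ,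
              euclNorm ((∑ j, c j • kvec B b ((j : ℕ) + 1)) - b) ≤ ε) →
            (∃ c : Fin (2 * k + 2) → ℝ,
              euclNorm ((∑ j, c j • kvec A b ((j : ℕ) + 1)) - b) ≤ ε)) := by
        intro i
        induction i with
        | zero => exact fun _ => ⟨A, hA, hind, fun j hj => absurd hj (Nat.not_lt_zero j), id⟩
        | succ i ih =>
          intro hik
          obtain ⟨B, hB, hBind, hInv, hG⟩ := ih (by omega)
          obtain ⟨u, huE, hwperp⟩ := exists_proj (KS B b (2 * i + 1))
            (ζ i b (fun l : Fin i => y B b l.1))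
          obtain ⟨p, hpE, hfperp⟩ := exists_proj (KS B b (2 * i + 1)) (kvec B b (2 * i + 1))
          have hfne : kvec B b (2 * i + 1) - p ≠ 0 := by
            intro h
            exact kvec_not_mem_KS hBind (show 2 * i + 1 < 2 * k + 2 by omega)
              (sub_eq_zero.mp h ▸ hpE)
          obtain ⟨R, hRorth, hRsym, hRfix, ⟨s, hws⟩, -⟩ :=
            rotate (ζ i b (fun l : Fin i => y B b l.1) - u) (kvec B b (2 * i + 1) - p) hfne
          have hEfix : ∀ e ∈ KS B b (2 * i + 1), R.mulVec e = e :=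
            fun e he => hRfix e (hwperp e he) (hfperp e he)
          have hETfix : ∀ e ∈ KS B b (2 * i + 1), Rᵀ.mulVec e = e :=
            fun e he => transpose_fix hRorth (hEfix e he)
          have hbE : b ∈ KS B b (2 * i + 1) := bmem_KS B b (by omega)
          have hRb : R.mulVec b = b := hEfix b hbE
          refine ⟨Rᵀ * B * R, hFoi B hB R hRorth, indep_conj hRorth hRb _ hBind, ?_, ?_⟩
          · -- invariant
            have hkpre : ∀ j < 2 * i + 1, kvec (Rᵀ * B * R) b j = kvec B b j := fun j hj =>
              (kvec_conj hRorth hRb j).trans (hETfix _ (kvec_mem_KS B b hj))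
            have hKSeq : KS (Rᵀ * B * R) b (2 * i + 1) = KS B b (2 * i + 1) :=
              KS_congr b hkpre
            have hrun : ∀ j < i, y (Rᵀ * B * R) b j = y B b j :=
              run_preserve ζ y hy b hRorth i
                (fun j hj => ⟨hEfix _ (hInv j hj).1, hEfix _ (hInv j hj).2⟩)
            have hz' : ∀ j ≤ i, ζ j b (fun l : Fin j => y (Rᵀ * B * R) b l.1)
                = ζ j b (fun l : Fin j => y B b l.1) :=
              fun j hj => congrArg _ (funext fun l => hrun l.1 (lt_of_lt_of_le l.isLt hj))
            have hkv_new : kvec (Rᵀ * B * R) b (2 * i + 1)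
                = p + Rᵀ.mulVec (kvec B b (2 * i + 1) - p) := by
              rw [kvec_conj hRorth hRb, Matrix.mulVec_sub, hETfix p hpE]
              abel
            have hwmem : ζ i b (fun l : Fin i => y B b l.1) - u
                ∈ KS (Rᵀ * B * R) b (2 * i + 2) := by
              have h1 : ζ i b (fun l : Fin i => y B b l.1) - u
                  = s • (Rᵀ.mulVec (kvec B b (2 * i + 1) - p)) := by rw [hRsym]; exact hws
              have h2 : Rᵀ.mulVec (kvec B b (2 * i + 1) - p)
                  = kvec (Rᵀ * B * R) b (2 * i + 1) - p := by rw [hkv_new]; abel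
              rw [h1, h2]
              refine Submodule.smul_mem _ _ (Submodule.sub_mem _
                (kvec_mem_KS _ _ (by omega)) ?_)
              exact KS_mono _ b (by omega) (hKSeq ▸ hpE)
            have hzimem : ζ i b (fun l : Fin i => y (Rᵀ * B * R) b l.1)
                ∈ KS (Rᵀ * B * R) b (2 * i + 2) := by
              have h3 : u + ((ζ i b fun l : Fin i => y B b l.1) - u)
                  = ζ i b fun l : Fin i => y B b l.1 := by abel
              rw [hz' i le_rfl, ← h3]
              exact Submodule.add_mem _ (KS_mono _ b (by omega) (hKSeq ▸ huE)) hwmem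
            intro j hj
            have h2i3 : 2 * (i + 1) + 1 = (2 * i + 2) + 1 := by omega
            rcases Nat.lt_succ_iff_lt_or_eq.mp hj with hji | rfl
            · constructor
              · rw [hz' j hji.le, h2i3]
                exact KS_mono _ b (by omega) (hKSeq ▸ ((hInv j hji).1))
              · rw [hrun j hji, h2i3]
                exact KS_mono _ b (by omega) (hKSeq ▸ ((hInv j hji).2))
            · constructor
              · rw [h2i3]
                exact KS_mono _ b (by omega) hzimem
              · rw [hy (Rᵀ * B * R) b j, h2i3]
                exact mulVec_mem_KS _ b hzimem
          · -- transfer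
            exact fun h => hG (G_transfer hRorth hRb h)
      -- final rotation
      obtain ⟨B, hB, hBind, hInv, hG⟩ := build k le_rfl
      obtain ⟨u, huE, hwperp⟩ := exists_proj (KS B b (2 * k + 1))
        (φ (b, fun i : Fin k => y B b i.1))
      obtain ⟨p, hpE, hfperp⟩ := exists_proj (KS B b (2 * k + 1)) (kvec B b (2 * k + 1))
      have hfne : kvec B b (2 * k + 1) - p ≠ 0 := by
        intro h
        exact kvec_not_mem_KS hBind (show 2 * k + 1 < 2 * k + 2 by omega)
          (sub_eq_zero.mp h ▸ hpE)
      obtain ⟨R, hRorth, hRsym, hRfix, -, ⟨t, hwt⟩⟩ :=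
        rotate (φ (b, fun i : Fin k => y B b i.1) - u) (kvec B b (2 * k + 1) - p) hfne
      have hEfix : ∀ e ∈ KS B b (2 * k + 1), R.mulVec e = e :=
        fun e he => hRfix e (hwperp e he) (hfperp e he)
      have hbE : b ∈ KS B b (2 * k + 1) := bmem_KS B b (by omega)
      have hRb : R.mulVec b = b := hEfix b hbE
      have hB' : Rᵀ * B * R ∈ F := hFoi B hB R hRorth
      have hrun : ∀ j < k, y (Rᵀ * B * R) b j = y B b j :=
        run_preserve ζ y hy b hRorth k
          (fun j hj => ⟨hEfix _ (hInv j hj).1, hEfix _ (hInv j hj).2⟩)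
      have hinfo : (fun i : Fin k => y (Rᵀ * B * R) b i.1) = (fun i : Fin k => y B b i.1) :=
        funext fun i => hrun i.1 i.isLt
      have hres := hφ _ hB' b hb
      rw [hinfo] at hres
      -- rewrite the residual
      have hBx : (Rᵀ * B * R).mulVec (φ (b, fun i : Fin k => y B b i.1))
          = Rᵀ.mulVec (B.mulVec (R.mulVec (φ (b, fun i : Fin k => y B b i.1)))) := by
        rw [← mulVec_mulVec, ← mulVec_mulVec]
      have hTb : Rᵀ.mulVec b = b := transpose_fix hRorth hRb
      rw [hBx, ← hTb, ← Matrix.mulVec_sub, euclNorm_transpose_orth hRorth, hTb] at hres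
      -- R x ∈ KS B b (2k+2)
      have hRx : R.mulVec (φ (b, fun i : Fin k => y B b i.1))
          = u + t • (kvec B b (2 * k + 1) - p) := by
        rw [← hwt, Matrix.mulVec_sub, hEfix u huE]
        abel
      have hxmem : R.mulVec (φ (b, fun i : Fin k => y B b i.1)) ∈ KS B b (2 * k + 2) := by
        rw [hRx]
        refine Submodule.add_mem _ (KS_mono _ b (by omega) huE)
          (Submodule.smul_mem _ _ (Submodule.sub_mem _ (kvec_mem_KS _ _ (by omega))
            (KS_mono _ b (by omega) hpE)))
      obtain ⟨c, hc⟩ := (mem_KS_iff B b (2 * k + 2) _).mp hxmem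
      refine hG ⟨c, ?_⟩
      have hsum : ∑ j : Fin (2 * k + 2), c j • kvec B b ((j : ℕ) + 1)
          = B.mulVec (R.mulVec (φ (b, fun i : Fin k => y B b i.1))) := by
        rw [← hc, mulVec_sum_smul]
        exact Finset.sum_congr rfl fun j _ => by rw [kvec_succ]
      rwa [hsum]
    · -- degenerate case
      obtain ⟨x, hxKS, hAx⟩ := degenerate (hFns A hA) b (2 * k + 2) hind
      obtain ⟨c, hc⟩ := (mem_KS_iff A b (2 * k + 2) x).mp hxKS
      refine ⟨c, ?_⟩
      have h1 : ∑ j : Fin (2 * k + 2), c j • kvec A b ((j : ℕ) + 1) = A.mulVec x := by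
        rw [← hc, mulVec_sum_smul]
        exact Finset.sum_congr rfl fun j _ => by rw [kvec_succ]
      rw [h1, hAx, sub_self]
      have : euclNorm (0 : Fin n → ℝ) = 0 := by simp [euclNorm]
      rw [this]
      exact hε.le
  -- define φ'
  refine ⟨fun p => if h : ∃ c : Fin (2 * k + 2) → ℝ,
      euclNorm ((∑ j, c j • p.2 j) - p.1) ≤ ε then
      (h.choose 0) • p.1 + ∑ j : Fin (2 * k + 1), h.choose j.succ • p.2 j.castSucc
    else 0, ?_⟩
  intro A hA b hb
  have hex : ∃ c : Fin (2 * k + 2) → ℝ,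
      euclNorm ((∑ j, c j • (fun i : Fin (2 * k + 2) => (A ^ ((i : ℕ) + 1)).mulVec b) j) - b)
        ≤ ε := core A hA b hb
  dsimp only
  rw [dif_pos hex]
  set c := hex.choose with hcdef
  have hcs := hex.choose_spec
  have hkey : A.mulVec (c 0 • b + ∑ j : Fin (2 * k + 1),
        c j.succ • (A ^ ((j.castSucc : ℕ) + 1)).mulVec b)
      = ∑ j : Fin (2 * k + 2), c j • (A ^ ((j : ℕ) + 1)).mulVec b := by
    rw [Fin.sum_univ_succ (f := fun j : Fin (2 * k + 2) => c j • (A ^ ((j : ℕ) + 1)).mulVec b)]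
    rw [Matrix.mulVec_add, Matrix.mulVec_smul, mulVec_sum_smul]
    congr 1
    · simp
    · refine Finset.sum_congr rfl fun j _ => ?_
      rw [mulVec_mulVec, ← pow_succ']
      simp
  rw [hkey]
  exact hcs
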